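/- Let F = ᵗ(f_1,…,f_n) be a vector-valued modular form of weight k whose modular Wronskian W(F) = det(F, DF, …, D^{n−1}F) is nonzero. Then W(F) is a holomorphic scalar modular form for SL_2(Z) of weight n(n+k−1). -/

import Mathlib

open Matrix

/-- The Möbius action of an integral 2×2 matrix on a point of the upper half-plane. -/
noncomputable def moeb (g : Matrix (Fin 2) (Fin 2) ℤ) (z : ℂ) : ℂ :=
  ((g 0 0 : ℂ) * z + (g 0 1 : ℂ)) / ((g 1 0 : ℂ) * z + (g 1 1 : ℂ))

/-- The automorphy factor `cz + d`. -/
noncomputable def jfac (g : Matrix (Fin 2) (Fin 2) ℤ) (z : ℂ) : ℂ :=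
  (g 1 0 : ℂ) * z + (g 1 1 : ℂ)

/-- `E₂` as a function of `q`. -/
noncomputable def E2q (q : ℂ) : ℂ :=
  1 - 24 * ∑' n : ℕ, ((ArithmeticFunction.sigma 1 (n+1) : ℕ) : ℂ) * q ^ (n+1)

/-- `E₂` as a function of `τ` in the upper half-plane, via `q = e^{2πiτ}`. -/
noncomputable def E2tau (τ : ℂ) : ℂ := E2q (Complex.exp (2 * Real.pi * Complex.I * τ))

/-- The modular (Serre) derivative in weight `j`:
`D_j f = (2πi)⁻¹ f' − (j/12) E₂ f`, mapping weight-`j` forms to weight-`j+2` forms. -/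
noncomputable def serreD (j : ℤ) (f : ℂ → ℂ) : ℂ → ℂ :=
  fun τ => (2 * Real.pi * Complex.I)⁻¹ * deriv f τ - ((j : ℂ) / 12) * E2tau τ * f τ

/-- Iterated modular derivative `D^m` applied componentwise to a weight-`k` vector-valued
modular form. -/
noncomputable def iterD (k : ℤ) (n : ℕ) (F : Fin n → ℂ → ℂ) : ℕ → Fin n → ℂ → ℂ
  | 0 => F
  | (m+1) => fun i => serreD (k + 2 * (m : ℤ)) (iterD k n F m i)

/-- The modular Wronskian `W(F) = det(F, DF, …, D^{n−1}F)`. -/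
noncomputable def modWronskian (k : ℤ) (n : ℕ) (F : Fin n → ℂ → ℂ) : ℂ → ℂ :=
  fun τ => Matrix.det (Matrix.of fun i m : Fin n => iterD k n F (m : ℕ) i τ)

namespace WAux

open Complex Metric Filter Finset

abbrev UH : Set ℂ := {τ : ℂ | 0 < τ.im}

lemma isOpen_UH : IsOpen UH := isOpen_lt continuous_const Complex.continuous_im

lemma derivDiffOn {f : ℂ → ℂ} (hf : DifferentiableOn ℂ f UH) :
    DifferentiableOn ℂ (deriv f) UH :=
  ((hf.analyticOnNhd isOpen_UH).deriv).differentiableOn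

lemma iterDerivDiffOn {f : ℂ → ℂ} (hf : DifferentiableOn ℂ f UH) (l : ℕ) :
    DifferentiableOn ℂ (deriv^[l] f) UH := by
  induction l with
  | zero => exact hf
  | succ l ih => rw [Function.iterate_succ_apply']; exact derivDiffOn ih

lemma deriv_congr_on {f g : ℂ → ℂ} (h : ∀ τ ∈ UH, f τ = g τ) {τ : ℂ} (hτ : τ ∈ UH) :
    deriv f τ = deriv g τ :=
  Filter.EventuallyEq.deriv_eq (Filter.eventuallyEq_of_mem (isOpen_UH.mem_nhds hτ) h)

lemma sigma_le_sq (m : ℕ) : (ArithmeticFunction.sigma 1 m : ℕ) ≤ m * m := by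
  rw [ArithmeticFunction.sigma_one_apply]
  have hsub : m.divisors ⊆ Finset.Icc 1 m := fun d hd =>
    Finset.mem_Icc.2 ⟨Nat.pos_of_mem_divisors hd, Nat.divisor_le hd⟩
  calc ∑ d ∈ m.divisors, d ≤ ∑ d ∈ Finset.Icc 1 m, d :=
        Finset.sum_le_sum_of_subset hsub
    _ ≤ ∑ _d ∈ Finset.Icc 1 m, m := Finset.sum_le_sum fun d hd => (Finset.mem_Icc.1 hd).2
    _ ≤ m * m := by
        rw [Finset.sum_const, smul_eq_mul, Nat.card_Icc]
        simp

lemma gsum_diffOn_r {r : ℝ} (hr0 : 0 ≤ r) (hr : r < 1) :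
    DifferentiableOn ℂ (fun q => ∑' n : ℕ, ((ArithmeticFunction.sigma 1 (n+1) : ℕ) : ℂ) * q ^ (n+1))
      (Metric.ball (0:ℂ) r) := by
  have hsum : Summable (fun n : ℕ => ((n+1 : ℝ))^2 * r^(n+1)) := by
    have h := summable_pow_mul_geometric_of_norm_lt_one (R := ℝ) 2 (r := r) (by
      rwa [Real.norm_eq_abs, _root_.abs_of_nonneg hr0])
    exact_mod_cast (summable_nat_add_iff 1).2 h
  have hb : ∀ (n : ℕ) (q : ℂ), q ∈ Metric.ball (0:ℂ) r →
      ‖((ArithmeticFunction.sigma 1 (n+1) : ℕ) : ℂ) * q ^ (n+1)‖ ≤ ((n+1 : ℝ))^2 * r^(n+1) := by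
    intro n q hq
    rw [mem_ball, dist_zero_right] at hq
    rw [norm_mul, norm_pow, Complex.norm_natCast]
    have h1 : ((ArithmeticFunction.sigma 1 (n+1) : ℕ) : ℝ) ≤ ((n+1 : ℝ))^2 := by
      have h0 := sigma_le_sq (n+1)
      have h2 : ((ArithmeticFunction.sigma 1 (n+1) : ℕ) : ℝ) ≤ ((n+1) * (n+1) : ℕ) := by
        exact_mod_cast h0
      calc ((ArithmeticFunction.sigma 1 (n+1) : ℕ) : ℝ) ≤ ((n+1) * (n+1) : ℕ) := h2
        _ = ((n+1:ℝ))^2 := by push_cast; ring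
    have h2 : ‖q‖^(n+1) ≤ r^(n+1) := pow_le_pow_left₀ (norm_nonneg q) hq.le (n+1)
    exact mul_le_mul h1 h2 (pow_nonneg (norm_nonneg q) _) (by positivity)
  have := (tendstoUniformlyOn_tsum_nat hsum hb).tendstoLocallyUniformlyOn
  refine this.differentiableOn ?_ Metric.isOpen_ball
  filter_upwards with N
  refine (Differentiable.differentiableOn ?_)
  exact Differentiable.fun_sum fun n _ => (differentiable_pow (n+1)).const_mul _

lemma E2q_diffOn : DifferentiableOn ℂ E2q (Metric.ball (0:ℂ) 1) := by
  intro q hq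
  rw [mem_ball, dist_zero_right] at hq
  set r : ℝ := (‖q‖ + 1)/2 with hr
  have h1 : ‖q‖ < r := by rw [hr]; linarith
  have h2 : r < 1 := by rw [hr]; linarith
  have h0 : 0 ≤ r := le_trans (norm_nonneg q) h1.le
  have hdq : DifferentiableAt ℂ E2q q := by
    have hg := gsum_diffOn_r h0 h2
    have hat : DifferentiableAt ℂ
        (fun q => ∑' n : ℕ, ((ArithmeticFunction.sigma 1 (n+1) : ℕ) : ℂ) * q ^ (n+1)) q :=
      hg.differentiableAt (Metric.isOpen_ball.mem_nhds (by rwa [mem_ball, dist_zero_right]))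
    exact (differentiableAt_const _).sub ((differentiableAt_const _).mul hat)
  exact hdq.differentiableWithinAt

lemma E2tau_diffOn : DifferentiableOn ℂ E2tau UH := by
  have hexp : Differentiable ℂ (fun τ : ℂ => Complex.exp (2 * Real.pi * Complex.I * τ)) :=
    (differentiable_id.const_mul _).cexp
  refine E2q_diffOn.comp hexp.differentiableOn ?_
  intro τ hτ
  rw [Set.mem_setOf_eq] at hτ
  rw [mem_ball, dist_zero_right]
  beta_reduce
  rw [Complex.norm_exp]
  have hre : (2 * (Real.pi:ℂ) * Complex.I * τ).re = -(2 * Real.pi * τ.im) := by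
    simp [Complex.mul_re, Complex.mul_im]
  rw [hre, Real.exp_lt_one_iff]
  nlinarith [Real.pi_pos]

noncomputable def coef (α : ℂ → ℂ) (β : ℕ → ℂ → ℂ) (e w : ℂ → ℂ) : ℕ → ℕ → ℂ → ℂ
  | 0, 0 => w
  | 0, _+1 => fun _ => 0
  | m+1, 0 => fun τ => α τ * deriv (coef α β e w m 0) τ + β m τ * coef α β e w m 0 τ
  | m+1, l+1 => fun τ =>
      α τ * (deriv (coef α β e w m (l+1)) τ + e τ * coef α β e w m l τ)
        + β m τ * coef α β e w m (l+1) τ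

variable {α : ℂ → ℂ} {β : ℕ → ℂ → ℂ} {e w : ℂ → ℂ}

lemma coef_zero_of_lt : ∀ m l : ℕ, m < l → coef α β e w m l = fun _ => 0 := by
  intro m
  induction m with
  | zero => intro l hl; obtain ⟨l', rfl⟩ := Nat.exists_eq_add_of_lt hl; rfl
  | succ m ih =>
    intro l hl
    obtain ⟨l', rfl⟩ : ∃ l', l = l' + 1 := ⟨l - 1, by omega⟩
    have h1 : coef α β e w m (l' + 1) = fun _ => 0 := ih _ (by omega)
    have h2 : coef α β e w m l' = fun _ => 0 := ih _ (by omega)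
    funext τ
    simp only [coef, h1, h2]
    simp

lemma coef_diag : ∀ m : ℕ, coef α β e w m m = fun τ => (α τ * e τ) ^ m * w τ := by
  intro m
  induction m with
  | zero => funext τ; simp [coef]
  | succ m ih =>
    funext τ
    show α τ * (deriv (coef α β e w m (m+1)) τ + e τ * coef α β e w m m τ)
        + β m τ * coef α β e w m (m+1) τ = _
    rw [coef_zero_of_lt m (m+1) (Nat.lt_succ_self m), ih]
    simp only [deriv_const']
    ring

lemma coef_diffOn (hα : DifferentiableOn ℂ α UH) (hβ : ∀ m, DifferentiableOn ℂ (β m) UH)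
    (he : DifferentiableOn ℂ e UH) (hw : DifferentiableOn ℂ w UH) :
    ∀ m l : ℕ, DifferentiableOn ℂ (coef α β e w m l) UH := by
  intro m
  induction m with
  | zero =>
    intro l
    cases l with
    | zero => exact hw
    | succ l => exact differentiableOn_const 0
  | succ m ih =>
    intro l
    cases l with
    | zero => exact (hα.mul (derivDiffOn (ih 0))).add ((hβ m).mul (ih 0))
    | succ l =>
      exact (hα.mul ((derivDiffOn (ih (l+1))).add (he.mul (ih l)))).add
        ((hβ m).mul (ih (l+1)))

lemma combo {X H : ℕ → ℂ → ℂ}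
    (hα : DifferentiableOn ℂ α UH) (hβ : ∀ m, DifferentiableOn ℂ (β m) UH)
    (he : DifferentiableOn ℂ e UH) (hw : DifferentiableOn ℂ w UH)
    (hX : ∀ l, DifferentiableOn ℂ (X l) UH)
    (hXd : ∀ l, ∀ τ ∈ UH, deriv (X l) τ = e τ * X (l+1) τ)
    (hH0 : ∀ τ ∈ UH, H 0 τ = w τ * X 0 τ)
    (hHS : ∀ m, ∀ τ ∈ UH, H (m+1) τ = α τ * deriv (H m) τ + β m τ * H m τ) :
    ∀ m, ∀ τ ∈ UH, H m τ = ∑ l ∈ Finset.range (m+1), coef α β e w m l τ * X l τ := by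
  intro m
  induction m with
  | zero => intro τ hτ; simpa [coef] using hH0 τ hτ
  | succ m ih =>
    intro τ hτ
    have hmem := isOpen_UH.mem_nhds hτ
    have hder : deriv (H m) τ
        = ∑ l ∈ Finset.range (m+1),
            (deriv (coef α β e w m l) τ * X l τ + coef α β e w m l τ * (e τ * X (l+1) τ)) := by
      rw [deriv_congr_on ih hτ]
      refine HasDerivAt.deriv (HasDerivAt.fun_sum fun l _ => ?_)
      have h1 : HasDerivAt (coef α β e w m l) (deriv (coef α β e w m l) τ) τ :=
        ((coef_diffOn hα hβ he hw m l).differentiableAt hmem).hasDerivAt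
      have h2 : HasDerivAt (X l) (e τ * X (l+1) τ) τ := by
        have := ((hX l).differentiableAt hmem).hasDerivAt
        rwa [hXd l τ hτ] at this
      exact h1.mul h2
    rw [hHS m τ hτ, hder, ih τ hτ]
    have hzero_a : coef α β e w m (m+1) τ = 0 := by
      rw [coef_zero_of_lt m (m+1) (Nat.lt_succ_self m)]
    have hzero_d : deriv (coef α β e w m (m+1)) τ = 0 := by
      rw [coef_zero_of_lt m (m+1) (Nat.lt_succ_self m)]; simp
    set A := α τ with hA
    set B := β m τ with hB
    set E := e τ with hE
    have hc0 : coef α β e w (m+1) 0 τ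
        = A * deriv (coef α β e w m 0) τ + B * coef α β e w m 0 τ := by
      simp only [coef, hA, hB]
    have hc : ∀ l : ℕ, coef α β e w (m+1) (l+1) τ
        = A * (deriv (coef α β e w m (l+1)) τ + E * coef α β e w m l τ)
          + B * coef α β e w m (l+1) τ := by
      intro l; simp only [coef, hA, hB, hE]
    have key : ∑ l ∈ Finset.range (m+1),
          ((A * deriv (coef α β e w m l) τ + B * coef α β e w m l τ) * X l τ)
        = (∑ l ∈ Finset.range (m+1),
            (A * deriv (coef α β e w m (l+1)) τ + B * coef α β e w m (l+1) τ) * X (l+1) τ)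
          + (A * deriv (coef α β e w m 0) τ + B * coef α β e w m 0 τ) * X 0 τ := by
      have h2 := Finset.sum_range_succ
        (fun l => (A * deriv (coef α β e w m l) τ + B * coef α β e w m l τ) * X l τ) (m+1)
      have h3 := Finset.sum_range_succ'
        (fun l => (A * deriv (coef α β e w m l) τ + B * coef α β e w m l τ) * X l τ) (m+1)
      rw [hzero_a, hzero_d] at h2
      simp only [mul_zero, add_zero, zero_mul] at h2
      rw [← h2, h3]
    have hL : A * (∑ l ∈ Finset.range (m+1),
            (deriv (coef α β e w m l) τ * X l τ + coef α β e w m l τ * (E * X (l + 1) τ)))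
          + B * ∑ l ∈ Finset.range (m+1), coef α β e w m l τ * X l τ
        = (∑ l ∈ Finset.range (m+1),
            ((A * deriv (coef α β e w m l) τ + B * coef α β e w m l τ) * X l τ))
          + ∑ l ∈ Finset.range (m+1), A * E * coef α β e w m l τ * X (l+1) τ := by
      rw [Finset.mul_sum, Finset.mul_sum, ← Finset.sum_add_distrib, ← Finset.sum_add_distrib]
      exact Finset.sum_congr rfl fun l _ => by ring
    have hR : ∑ l ∈ Finset.range (m+1+1), coef α β e w (m+1) l τ * X l τ
        = (∑ l ∈ Finset.range (m+1),
            (A * deriv (coef α β e w m (l+1)) τ + B * coef α β e w m (l+1) τ) * X (l+1) τ)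
          + (∑ l ∈ Finset.range (m+1), A * E * coef α β e w m l τ * X (l+1) τ)
          + (A * deriv (coef α β e w m 0) τ + B * coef α β e w m 0 τ) * X 0 τ := by
      rw [Finset.sum_range_succ'
        (fun l => coef α β e w (m+1) l τ * X l τ) (m+1), hc0]
      congr 1
      rw [← Finset.sum_add_distrib]
      refine Finset.sum_congr rfl fun l _ => ?_
      rw [hc l]; ring
    rw [hL, hR, key]
    ring

lemma det_factor {n : ℕ} (c : ℕ → ℕ → ℂ) (x : ℕ → Fin n → ℂ) (y : Fin n → Fin n → ℂ)
    (hzero : ∀ m l : ℕ, m < l → c m l = 0)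
    (hy : ∀ (i : Fin n) (m : Fin n), y i m = ∑ l ∈ Finset.range ((m:ℕ)+1), c (m:ℕ) l * x l i) :
    Matrix.det (Matrix.of y)
      = Matrix.det (Matrix.of fun i (l : Fin n) => x (l:ℕ) i) * ∏ m : Fin n, c (m:ℕ) (m:ℕ) := by
  have hmul : Matrix.of y
      = (Matrix.of fun i (l : Fin n) => x (l:ℕ) i) * (Matrix.of fun l m : Fin n => c (m:ℕ) (l:ℕ)) := by
    ext i m
    rw [Matrix.mul_apply]
    simp only [Matrix.of_apply]
    rw [hy i m]
    rw [Fin.sum_univ_eq_sum_range (fun l => x l i * c (m:ℕ) l) n]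
    rw [Finset.sum_subset (Finset.range_subset_range.2 m.isLt)]
    · exact Finset.sum_congr rfl fun l _ => mul_comm _ _
    · intro l hl hnot
      rw [Finset.mem_range] at hl hnot
      rw [hzero (m:ℕ) l (by omega), zero_mul]
  rw [hmul, Matrix.det_mul]
  congr 1
  rw [Matrix.det_of_upperTriangular]
  · rfl
  · intro l m hlt
    exact hzero (m:ℕ) (l:ℕ) hlt

section SL2
variable (γ : Matrix.SpecialLinearGroup (Fin 2) ℤ)

lemma det_coe : ((γ.1 0 0 : ℂ)) * (γ.1 1 1 : ℂ) - (γ.1 0 1 : ℂ) * (γ.1 1 0 : ℂ) = 1 := by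
  have h := γ.2
  rw [Matrix.det_fin_two] at h
  exact_mod_cast congrArg (Int.cast : ℤ → ℂ) h

lemma jfac_ne_zero {τ : ℂ} (hτ : 0 < τ.im) : jfac γ.1 τ ≠ 0 := by
  intro h
  have him : ((γ.1 1 0 : ℂ) * τ + (γ.1 1 1 : ℂ)).im = (γ.1 1 0 : ℝ) * τ.im := by
    simp [Complex.add_im, Complex.mul_im]
  have hre : ((γ.1 1 0 : ℂ) * τ + (γ.1 1 1 : ℂ)).re = (γ.1 1 0 : ℝ) * τ.re + (γ.1 1 1 : ℝ) := by
    simp [Complex.add_re, Complex.mul_re]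
  rw [jfac] at h
  have h1 : (γ.1 1 0 : ℝ) * τ.im = 0 := by rw [← him, h]; simp
  have hc : (γ.1 1 0 : ℝ) = 0 := by
    rcases mul_eq_zero.1 h1 with h' | h'
    · exact h'
    · exact absurd h' (ne_of_gt hτ)
  have hc' : γ.1 1 0 = 0 := by exact_mod_cast hc
  have hd : (γ.1 1 1 : ℝ) = 0 := by
    have := congrArg Complex.re h
    rw [hre, hc, zero_mul, zero_add] at this
    simpa using this
  have hd' : γ.1 1 1 = 0 := by exact_mod_cast hd
  have := γ.2
  rw [Matrix.det_fin_two, hc', hd'] at this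
  simp at this

lemma moeb_im {τ : ℂ} (hτ : 0 < τ.im) :
    (moeb γ.1 τ).im = τ.im / Complex.normSq (jfac γ.1 τ) := by
  rw [moeb, Complex.div_im]
  have hdet : ((γ.1 0 0:ℝ)) * (γ.1 1 1:ℝ) - (γ.1 0 1:ℝ) * (γ.1 1 0:ℝ) = 1 := by
    have h := γ.2; rw [Matrix.det_fin_two] at h; exact_mod_cast h
  rw [jfac]
  simp only [Complex.add_im, Complex.add_re, Complex.mul_im, Complex.mul_re,
    Complex.intCast_im, Complex.intCast_re, mul_zero, zero_mul, sub_zero, add_zero, zero_add]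
  rw [div_sub_div_same]
  have hnum : (γ.1 0 0:ℝ) * τ.im * ((γ.1 1 0:ℝ) * τ.re + (γ.1 1 1:ℝ))
      - ((γ.1 0 0:ℝ) * τ.re + (γ.1 0 1:ℝ)) * ((γ.1 1 0:ℝ) * τ.im) = τ.im := by
    linear_combination τ.im * hdet
  rw [hnum]

lemma moeb_mem_UH {τ : ℂ} (hτ : 0 < τ.im) : moeb γ.1 τ ∈ UH := by
  have h := moeb_im γ hτ
  have hnz := jfac_ne_zero γ hτ
  have hpos : 0 < Complex.normSq (jfac γ.1 τ) := Complex.normSq_pos.2 hnz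
  show 0 < (moeb γ.1 τ).im
  rw [h]
  positivity

lemma moeb_hasDerivAt {τ : ℂ} (hτ : 0 < τ.im) :
    HasDerivAt (moeb γ.1) (((jfac γ.1 τ) ^ 2)⁻¹) τ := by
  have hnz := jfac_ne_zero γ hτ
  have hnum : HasDerivAt (fun z : ℂ => (γ.1 0 0 : ℂ) * z + (γ.1 0 1 : ℂ)) (γ.1 0 0 : ℂ) τ := by
    simpa using ((hasDerivAt_id τ).const_mul (γ.1 0 0 : ℂ)).add_const (γ.1 0 1 : ℂ)
  have hden : HasDerivAt (fun z : ℂ => (γ.1 1 0 : ℂ) * z + (γ.1 1 1 : ℂ)) (γ.1 1 0 : ℂ) τ := by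
    simpa using ((hasDerivAt_id τ).const_mul (γ.1 1 0 : ℂ)).add_const (γ.1 1 1 : ℂ)
  have := hnum.div hden (by rwa [jfac] at hnz)
  refine this.congr_deriv ?_
  rw [jfac]
  have hnum2 : (γ.1 0 0 : ℂ) * ((γ.1 1 0 : ℂ) * τ + (γ.1 1 1 : ℂ))
      - ((γ.1 0 0 : ℂ) * τ + (γ.1 0 1 : ℂ)) * (γ.1 1 0 : ℂ) = 1 := by
    linear_combination det_coe γ
  rw [hnum2, one_div]

lemma moeb_diffOn : DifferentiableOn ℂ (moeb γ.1) UH := fun τ hτ =>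
  ((moeb_hasDerivAt γ hτ).differentiableAt).differentiableWithinAt

end SL2

lemma sum_iterderiv {n : ℕ} {F : Fin n → ℂ → ℂ} (hF : ∀ j, DifferentiableOn ℂ (F j) UH)
    (r : Fin n → ℂ) :
    ∀ (l : ℕ), ∀ τ ∈ UH, deriv^[l] (fun σ => ∑ j, r j * F j σ) τ = ∑ j, r j * deriv^[l] (F j) τ := by
  intro l
  induction l with
  | zero => intro τ _; rfl
  | succ l ih =>
    intro τ hτ
    have hmem := isOpen_UH.mem_nhds hτ
    rw [Function.iterate_succ_apply', deriv_congr_on ih hτ]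
    have h : HasDerivAt (fun σ => ∑ j, r j * deriv^[l] (F j) σ)
        (∑ j, r j * deriv^[l+1] (F j) τ) τ := by
      refine HasDerivAt.fun_sum fun j _ => ?_
      have h1 : HasDerivAt (deriv^[l] (F j)) (deriv^[l+1] (F j) τ) τ := by
        have h0 := ((iterDerivDiffOn (hF j) l).differentiableAt hmem).hasDerivAt
        rwa [show deriv^[l+1] (F j) τ = deriv (deriv^[l] (F j)) τ from by
          rw [Function.iterate_succ_apply']]
      exact h1.const_mul (r j)
    exact h.deriv

lemma prod_diffOn {ι : Type*} (s : Finset ι) (f : ι → ℂ → ℂ)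
    (h : ∀ i ∈ s, DifferentiableOn ℂ (f i) UH) :
    DifferentiableOn ℂ (fun τ => ∏ i ∈ s, f i τ) UH := by
  classical
  induction s using Finset.induction_on with
  | empty => simpa using differentiableOn_const 1
  | insert a s hnotmem ih =>
    simp only [Finset.prod_insert hnotmem]
    exact (h a (Finset.mem_insert_self a s)).mul
      (ih fun i hi => h i (Finset.mem_insert_of_mem hi))

lemma sum_diffOn {ι : Type*} (s : Finset ι) (f : ι → ℂ → ℂ)
    (h : ∀ i ∈ s, DifferentiableOn ℂ (f i) UH) :
    DifferentiableOn ℂ (fun τ => ∑ i ∈ s, f i τ) UH := by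
  classical
  induction s using Finset.induction_on with
  | empty => simpa using differentiableOn_const 0
  | insert a s hnotmem ih =>
    simp only [Finset.sum_insert hnotmem]
    exact (h a (Finset.mem_insert_self a s)).add
      (ih fun i hi => h i (Finset.mem_insert_of_mem hi))

lemma det_diffOn {n : ℕ} (g : Fin n → Fin n → ℂ → ℂ)
    (h : ∀ i j, DifferentiableOn ℂ (g i j) UH) :
    DifferentiableOn ℂ (fun τ => Matrix.det (Matrix.of fun i j => g i j τ)) UH := by
  have heq : (fun τ => Matrix.det (Matrix.of fun i j => g i j τ))
      = fun τ => ∑ σ : Equiv.Perm (Fin n), ((Equiv.Perm.sign σ : ℤ) : ℂ) * ∏ i, g (σ i) i τ := by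
    funext τ
    rw [Matrix.det_apply']
    rfl
  rw [heq]
  refine sum_diffOn _ _ fun σ _ => DifferentiableOn.const_mul ?_ _
  exact prod_diffOn _ _ fun i _ => h (σ i) i

lemma cauchy_step {f : ℂ → ℂ} (hf : DifferentiableOn ℂ f UH) {t C : ℝ} (ht : 0 < t)
    (hC : ∀ τ : ℂ, t ≤ τ.im → ‖f τ‖ ≤ C) {τ : ℂ} (hτ : t + 1 ≤ τ.im) : ‖deriv f τ‖ ≤ C := by
  have hcb : closedBall τ 1 ⊆ {z : ℂ | t ≤ z.im} := by
    intro z hz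
    rw [mem_closedBall, dist_eq_norm] at hz
    have h1 : |(z - τ).im| ≤ ‖z - τ‖ := by
      exact Complex.abs_im_le_norm _
    have h2 : (z - τ).im = z.im - τ.im := by simp [Complex.sub_im]
    have h3 : |z.im - τ.im| ≤ 1 := by rw [← h2]; exact h1.trans hz
    have h4 := abs_le.1 h3
    show t ≤ z.im
    linarith [h4.1]
  have hUH : closedBall τ 1 ⊆ UH := fun z hz => lt_of_lt_of_le ht (hcb hz)
  have hd : DiffContOnCl ℂ f (ball τ 1) :=
    ⟨hf.mono (ball_subset_closedBall.trans hUH),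
      hf.continuousOn.mono (closure_ball_subset_closedBall.trans hUH)⟩
  have := Complex.norm_deriv_le_of_forall_mem_sphere_norm_le one_pos hd
    (fun z hz => hC z (hcb (sphere_subset_closedBall hz)))
  simpa using this

lemma iter_bound {f : ℂ → ℂ} {C : ℝ} (hf : DifferentiableOn ℂ f UH)
    (hC : ∀ τ : ℂ, 1 ≤ τ.im → ‖f τ‖ ≤ C) :
    ∀ (l : ℕ) (τ : ℂ), 1 + l ≤ τ.im → ‖deriv^[l] f τ‖ ≤ C := by
  intro l
  induction l with
  | zero => intro τ hτ; exact hC τ (by simpa using hτ)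
  | succ l ih =>
    intro τ hτ
    rw [Function.iterate_succ_apply']
    refine cauchy_step (iterDerivDiffOn hf l) (t := 1 + l) (by positivity) ih ?_
    push_cast at hτ ⊢
    linarith

end WAux


/-- If `F` is a holomorphic vector-valued modular form of weight `k` for a representation
`ρ` of `SL₂(ℤ)` with `ρ(T)` unitarizable and `det ρ` trivial, holomorphic at infinity, and
with nonzero modular Wronskian `W(F)`, then `W(F)` is a holomorphic scalar modular form for
`SL₂(ℤ)` of weight `n(n+k−1)`: it transforms with weight `n(n+k−1)`, is holomorphic on the
upper half-plane, and is bounded at infinity. -/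
theorem modular_wronskian_is_modular_form
    (n : ℕ) (hn : 0 < n) (k : ℤ)
    (ρ : Matrix.SpecialLinearGroup (Fin 2) ℤ →* Matrix.GeneralLinearGroup (Fin n) ℂ)
    (hdet : ∀ γ, Matrix.det ((ρ γ : Matrix (Fin n) (Fin n) ℂ)) = 1)
    (hunitT : ∃ u : Matrix (Fin n) (Fin n) ℂ, IsUnit u ∧
      u * (ρ ModularGroup.T : Matrix (Fin n) (Fin n) ℂ) * u⁻¹
        ∈ Matrix.unitaryGroup (Fin n) ℂ)
    (F : Fin n → ℂ → ℂ)
    (hhol : ∀ i, DifferentiableOn ℂ (F i) {τ : ℂ | 0 < τ.im})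
    (htrans : ∀ γ : Matrix.SpecialLinearGroup (Fin 2) ℤ, ∀ τ : ℂ, 0 < τ.im → ∀ i,
      F i (moeb (γ : Matrix (Fin 2) (Fin 2) ℤ) τ)
        = jfac (γ : Matrix (Fin 2) (Fin 2) ℤ) τ ^ k *
            ∑ j, ((ρ γ : Matrix (Fin n) (Fin n) ℂ) i j) * F j τ)
    (hbdd : ∀ i, ∃ C : ℝ, ∀ τ : ℂ, 1 ≤ τ.im → ‖F i τ‖ ≤ C)
    (hW : ∃ τ : ℂ, 0 < τ.im ∧ modWronskian k n F τ ≠ 0) :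
    (∀ γ : Matrix.SpecialLinearGroup (Fin 2) ℤ, ∀ τ : ℂ, 0 < τ.im →
      modWronskian k n F (moeb (γ : Matrix (Fin 2) (Fin 2) ℤ) τ)
        = jfac (γ : Matrix (Fin 2) (Fin 2) ℤ) τ ^ ((n : ℤ) * ((n : ℤ) + k - 1)) *
            modWronskian k n F τ) ∧
    DifferentiableOn ℂ (modWronskian k n F) {τ : ℂ | 0 < τ.im} ∧
    ∃ C A : ℝ, ∀ τ : ℂ, A ≤ τ.im → ‖modWronskian k n F τ‖ ≤ C := by
  classical
  have hFd : ∀ i, DifferentiableOn ℂ (F i) WAux.UH := hhol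
  set aC : ℕ → ℕ → ℂ → ℂ := WAux.coef (fun _ => (2 * Real.pi * Complex.I : ℂ)⁻¹)
      (fun m τ => -(((k + 2 * (m:ℕ) : ℤ) : ℂ) / 12 * E2tau τ)) (fun _ => 1) (fun _ => 1) with haC
  have hβd : ∀ m : ℕ, DifferentiableOn ℂ
      (fun τ => -(((k + 2 * (m:ℕ) : ℤ) : ℂ) / 12 * E2tau τ)) WAux.UH :=
    fun m => (WAux.E2tau_diffOn.const_mul _).neg
  have comboA : ∀ (i : Fin n) (m : ℕ), ∀ τ ∈ WAux.UH,
      iterD k n F m i τ = ∑ l ∈ Finset.range (m+1), aC m l τ * deriv^[l] (F i) τ := by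
    intro i
    refine WAux.combo (X := fun l => deriv^[l] (F i)) (H := fun m => iterD k n F m i)
      (differentiableOn_const _) hβd (differentiableOn_const _) (differentiableOn_const _)
      (fun l => WAux.iterDerivDiffOn (hFd i) l) ?_ ?_ ?_
    · intro l τ hτ
      show deriv (deriv^[l] (F i)) τ = 1 * deriv^[l+1] (F i) τ
      rw [one_mul, Function.iterate_succ_apply']
    · intro τ hτ
      show iterD k n F 0 i τ = 1 * deriv^[0] (F i) τ
      rw [one_mul]; rfl
    · intro m τ hτ
      show iterD k n F (m+1) i τ = _
      simp only [iterD, serreD]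
      push_cast
      ring
  set Wr : ℂ → ℂ := fun τ => Matrix.det (Matrix.of fun i l : Fin n => deriv^[(l:ℕ)] (F i) τ)
    with hWr
  set cst : ℂ := ∏ m : Fin n, ((2 * Real.pi * Complex.I : ℂ)⁻¹) ^ (m:ℕ) with hcst
  have fact1 : ∀ τ ∈ WAux.UH, modWronskian k n F τ = Wr τ * cst := by
    intro τ hτ
    have h := WAux.det_factor (fun m l => aC m l τ) (fun l i => deriv^[l] (F i) τ)
      (fun i m => iterD k n F (m:ℕ) i τ)
      (fun m l hml => congrFun (WAux.coef_zero_of_lt m l hml) τ)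
      (fun i m => comboA i (m:ℕ) τ hτ)
    have hprodeq : (∏ m : Fin n, aC (m:ℕ) (m:ℕ) τ) = cst := by
      rw [hcst]
      refine Finset.prod_congr rfl fun m _ => ?_
      rw [haC, WAux.coef_diag]
      simp
    calc modWronskian k n F τ
        = Matrix.det (Matrix.of fun i (l : Fin n) => deriv^[(l:ℕ)] (F i) τ)
            * ∏ m : Fin n, aC (m:ℕ) (m:ℕ) τ := h
      _ = Wr τ * cst := by rw [hprodeq]
  refine ⟨?_, ?_, ?_⟩
  · -- transformation law
    intro γ τ hτ
    have hτU : τ ∈ WAux.UH := hτ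
    have hgτ : moeb (↑γ) τ ∈ WAux.UH := WAux.moeb_mem_UH γ hτ
    have hgd : DifferentiableOn ℂ (moeb (↑γ : Matrix (Fin 2) (Fin 2) ℤ)) WAux.UH :=
      WAux.moeb_diffOn γ
    have hjne : jfac (↑γ) τ ≠ 0 := WAux.jfac_ne_zero γ hτ
    set G : Fin n → ℂ → ℂ :=
      fun i σ => ∑ j, ((ρ γ : Matrix (Fin n) (Fin n) ℂ) i j) * F j σ with hG
    have hGd : ∀ i, DifferentiableOn ℂ (G i) WAux.UH := fun i =>
      WAux.sum_diffOn _ _ fun j _ => (hFd j).const_mul _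
    have hwd : DifferentiableOn ℂ (fun σ => jfac (↑γ) σ ^ k) WAux.UH := by
      intro σ hσ
      have h1 : DifferentiableAt ℂ (jfac (↑γ : Matrix (Fin 2) (Fin 2) ℤ)) σ :=
        (differentiableAt_id.const_mul _).add_const _
      exact (h1.zpow (Or.inl (WAux.jfac_ne_zero γ hσ))).differentiableWithinAt
    set bC : ℕ → ℕ → ℂ → ℂ := WAux.coef (fun _ => 1) (fun _ _ => 0)
      (deriv (moeb (↑γ : Matrix (Fin 2) (Fin 2) ℤ))) (fun _ => 1) with hbC
    have comboB : ∀ (i : Fin n) (m : ℕ), ∀ σ ∈ WAux.UH,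
        deriv^[m] (fun σ' => F i (moeb (↑γ) σ')) σ
          = ∑ l ∈ Finset.range (m+1), bC m l σ * deriv^[l] (F i) (moeb (↑γ) σ) := by
      intro i
      refine WAux.combo (X := fun l σ => deriv^[l] (F i) (moeb (↑γ) σ))
        (H := fun m => deriv^[m] (fun σ' => F i (moeb (↑γ) σ')))
        (differentiableOn_const _) (fun _ => differentiableOn_const _)
        (WAux.derivDiffOn hgd) (differentiableOn_const _)
        (fun l => (WAux.iterDerivDiffOn (hFd i) l).comp hgd
          (fun σ hσ => WAux.moeb_mem_UH γ hσ)) ?_ ?_ ?_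
      · intro l σ hσ
        show deriv (fun σ' => deriv^[l] (F i) (moeb (↑γ) σ')) σ
          = deriv (moeb (↑γ : Matrix (Fin 2) (Fin 2) ℤ)) σ * deriv^[l+1] (F i) (moeb (↑γ) σ)
        have h1 : HasDerivAt (moeb (↑γ : Matrix (Fin 2) (Fin 2) ℤ))
            (((jfac (↑γ) σ) ^ 2)⁻¹) σ := WAux.moeb_hasDerivAt γ hσ
        have h2 : HasDerivAt (deriv^[l] (F i)) (deriv^[l+1] (F i) (moeb (↑γ) σ))
            (moeb (↑γ) σ) := by
          have h0 := ((WAux.iterDerivDiffOn (hFd i) l).differentiableAt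
            (WAux.isOpen_UH.mem_nhds (WAux.moeb_mem_UH γ hσ))).hasDerivAt
          rwa [show deriv^[l+1] (F i) (moeb (↑γ) σ)
              = deriv (deriv^[l] (F i)) (moeb (↑γ) σ) from by
            rw [Function.iterate_succ_apply']]
        have h3 : HasDerivAt (fun σ' => deriv^[l] (F i) (moeb (↑γ) σ'))
            (deriv^[l+1] (F i) (moeb (↑γ) σ) * ((jfac (↑γ) σ) ^ 2)⁻¹) σ := h2.comp σ h1
        rw [h3.deriv, h1.deriv]
        ring
      · intro σ hσ
        show deriv^[0] (fun σ' => F i (moeb (↑γ) σ')) σ = 1 * deriv^[0] (F i) (moeb (↑γ) σ)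
        rw [one_mul]; rfl
      · intro m σ hσ
        show deriv^[m+1] (fun σ' => F i (moeb (↑γ) σ')) σ
          = 1 * deriv (deriv^[m] (fun σ' => F i (moeb (↑γ) σ'))) σ
            + 0 * deriv^[m] (fun σ' => F i (moeb (↑γ) σ')) σ
        rw [Function.iterate_succ_apply']; ring
    set cC : ℕ → ℕ → ℂ → ℂ := WAux.coef (fun _ => 1) (fun _ _ => 0) (fun _ => 1)
      (fun σ => jfac (↑γ) σ ^ k) with hcC
    have comboC : ∀ (i : Fin n) (m : ℕ), ∀ σ ∈ WAux.UH,
        deriv^[m] (fun σ' => F i (moeb (↑γ) σ')) σ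
          = ∑ l ∈ Finset.range (m+1), cC m l σ * deriv^[l] (G i) σ := by
      intro i
      refine WAux.combo (X := fun l => deriv^[l] (G i))
        (H := fun m => deriv^[m] (fun σ' => F i (moeb (↑γ) σ')))
        (differentiableOn_const _) (fun _ => differentiableOn_const _)
        (differentiableOn_const _) hwd
        (fun l => WAux.iterDerivDiffOn (hGd i) l) ?_ ?_ ?_
      · intro l σ hσ
        show deriv (deriv^[l] (G i)) σ = 1 * deriv^[l+1] (G i) σ
        rw [one_mul, Function.iterate_succ_apply']
      · intro σ hσ
        show deriv^[0] (fun σ' => F i (moeb (↑γ) σ')) σ = jfac (↑γ) σ ^ k * deriv^[0] (G i) σ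
        exact htrans γ σ hσ i
      · intro m σ hσ
        show deriv^[m+1] (fun σ' => F i (moeb (↑γ) σ')) σ
          = 1 * deriv (deriv^[m] (fun σ' => F i (moeb (↑γ) σ'))) σ
            + 0 * deriv^[m] (fun σ' => F i (moeb (↑γ) σ')) σ
        rw [Function.iterate_succ_apply']; ring
    have hdet1 : Matrix.det (Matrix.of fun i m : Fin n =>
          deriv^[(m:ℕ)] (fun σ' => F i (moeb (↑γ) σ')) τ)
        = Wr (moeb (↑γ) τ) * ∏ m : Fin n, bC (m:ℕ) (m:ℕ) τ :=
      WAux.det_factor (fun m l => bC m l τ)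
        (fun l i => deriv^[l] (F i) (moeb (↑γ) τ))
        (fun i m => deriv^[(m:ℕ)] (fun σ' => F i (moeb (↑γ) σ')) τ)
        (fun m l hml => congrFun (WAux.coef_zero_of_lt m l hml) τ)
        (fun i m => comboB i (m:ℕ) τ hτU)
    have hdet2 : Matrix.det (Matrix.of fun i m : Fin n =>
          deriv^[(m:ℕ)] (fun σ' => F i (moeb (↑γ) σ')) τ)
        = Matrix.det (Matrix.of fun i (l : Fin n) => deriv^[(l:ℕ)] (G i) τ)
            * ∏ m : Fin n, cC (m:ℕ) (m:ℕ) τ :=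
      WAux.det_factor (fun m l => cC m l τ)
        (fun l i => deriv^[l] (G i) τ)
        (fun i m => deriv^[(m:ℕ)] (fun σ' => F i (moeb (↑γ) σ')) τ)
        (fun m l hml => congrFun (WAux.coef_zero_of_lt m l hml) τ)
        (fun i m => comboC i (m:ℕ) τ hτU)
    have hdg : deriv (moeb (↑γ : Matrix (Fin 2) (Fin 2) ℤ)) τ = ((jfac (↑γ) τ)^2)⁻¹ :=
      (WAux.moeb_hasDerivAt γ hτ).deriv
    have hdiagb : ∏ m : Fin n, bC (m:ℕ) (m:ℕ) τ
        = (((jfac (↑γ) τ)^2)⁻¹) ^ (∑ i ∈ Finset.range n, i) := by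
      have hb1 : ∀ m : Fin n, bC (m:ℕ) (m:ℕ) τ = (((jfac (↑γ) τ)^2)⁻¹)^(m:ℕ) := by
        intro m
        show bC (m:ℕ) (m:ℕ) τ = _
        rw [hbC, WAux.coef_diag]
        simp [hdg]
      rw [Finset.prod_congr rfl (fun m _ => hb1 m), Finset.prod_pow_eq_pow_sum]
      congr 1
      exact Fin.sum_univ_eq_sum_range (fun i => i) n
    have hdiagc : ∏ m : Fin n, cC (m:ℕ) (m:ℕ) τ = (jfac (↑γ) τ ^ k) ^ n := by
      have hc1 : ∀ m : Fin n, cC (m:ℕ) (m:ℕ) τ = jfac (↑γ) τ ^ k := by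
        intro m
        rw [hcC, WAux.coef_diag]
        simp
      rw [Finset.prod_congr rfl (fun m _ => hc1 m), Finset.prod_const, Finset.card_univ,
        Fintype.card_fin]
    have hGdet : Matrix.det (Matrix.of fun i (l : Fin n) => deriv^[(l:ℕ)] (G i) τ) = Wr τ := by
      have hmat : (Matrix.of fun i (l : Fin n) => deriv^[(l:ℕ)] (G i) τ)
          = (ρ γ : Matrix (Fin n) (Fin n) ℂ)
              * (Matrix.of fun j (l : Fin n) => deriv^[(l:ℕ)] (F j) τ) := by
        ext i l
        rw [Matrix.mul_apply]
        simpa using WAux.sum_iterderiv hFd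
          (fun j => (ρ γ : Matrix (Fin n) (Fin n) ℂ) i j) (l:ℕ) τ hτU
      rw [hmat, Matrix.det_mul, hdet γ, one_mul]
    have hkey := (hdet1.symm.trans hdet2)
    rw [hGdet, hdiagb, hdiagc] at hkey
    set J := jfac (↑γ) τ with hJdef
    set s := ∑ i ∈ Finset.range n, i with hs
    have hne2s : (J^(2*s) : ℂ) ≠ 0 := pow_ne_zero _ hjne
    have hWg : Wr (moeb (↑γ) τ) = Wr τ * (J^k)^n * J^(2*s) := by
      rw [← inv_pow, ← pow_mul] at hkey
      have h := congrArg (· * (J^(2*s))) hkey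
      beta_reduce at h
      rwa [mul_assoc, inv_pow, inv_mul_cancel₀ hne2s, mul_one] at h
    have hzpw : (J^k)^n * J^(2*s) = J^((n:ℤ)*((n:ℤ)+k-1)) := by
      have e1 : (J^k)^n = J^(k * (n:ℤ)) := by
        rw [← zpow_natCast (J^k) n, ← _root_.zpow_mul]
      have e2 : J^(2*s) = J^(((2*s : ℕ)) : ℤ) := by rw [zpow_natCast]
      rw [e1, e2, ← zpow_add₀ hjne]
      congr 1
      have h1 : ((2 * s : ℕ) : ℤ) = (n:ℤ) * ((n:ℤ) - 1) := by
        have h0 : s * 2 = n * (n - 1) := Finset.sum_range_id_mul_two n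
        have h2 : ((s * 2 : ℕ) : ℤ) = ((n * (n - 1) : ℕ) : ℤ) := by rw [h0]
        push_cast [Nat.cast_sub hn] at h2 ⊢
        linarith
      rw [h1]; ring
    rw [fact1 _ hgτ, fact1 _ hτU, hWg, ← hzpw]
    ring
  · -- holomorphy
    have hdiff : DifferentiableOn ℂ (fun τ => Wr τ * cst) WAux.UH := by
      refine DifferentiableOn.mul_const ?_ _
      exact WAux.det_diffOn (fun i l => fun τ => deriv^[(l:ℕ)] (F i) τ)
        (fun i l => WAux.iterDerivDiffOn (hFd i) (l:ℕ))
    exact hdiff.congr fact1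
  · -- boundedness
    choose Cb hCb using hbdd
    set C0 : ℝ := ∑ i : Fin n, |Cb i| with hC0def
    have hC0nn : 0 ≤ C0 := Finset.sum_nonneg fun i _ => abs_nonneg _
    have hC0 : ∀ (i : Fin n) (τ : ℂ), 1 ≤ τ.im → ‖F i τ‖ ≤ C0 := by
      intro i τ h
      refine (hCb i τ h).trans ((le_abs_self _).trans ?_)
      exact Finset.single_le_sum (f := fun i => |Cb i|) (fun j _ => abs_nonneg _)
        (Finset.mem_univ i)
    refine ⟨(Fintype.card (Equiv.Perm (Fin n)) : ℝ) * C0^n * ‖cst‖, 1 + n, ?_⟩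
    intro τ hτim
    have hτU : τ ∈ WAux.UH := by
      show 0 < τ.im
      have hpos : (0:ℝ) < 1 + n := by positivity
      linarith
    rw [fact1 τ hτU, norm_mul]
    refine mul_le_mul_of_nonneg_right ?_ (norm_nonneg _)
    have hentry : ∀ (i l : Fin n), ‖deriv^[(l:ℕ)] (F i) τ‖ ≤ C0 := by
      intro i l
      refine WAux.iter_bound (hFd i) (hC0 i) (l:ℕ) τ ?_
      have hl : ((l:ℕ):ℝ) ≤ (n:ℝ) := by exact_mod_cast l.isLt.le
      linarith
    show ‖Matrix.det (Matrix.of fun i l : Fin n => deriv^[(l:ℕ)] (F i) τ)‖ ≤ _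
    rw [Matrix.det_apply']
    have hterm : ∀ σ : Equiv.Perm (Fin n),
        ‖((Equiv.Perm.sign σ : ℤ) : ℂ)
            * ∏ i, (Matrix.of fun i l : Fin n => deriv^[(l:ℕ)] (F i) τ) (σ i) i‖ ≤ C0^n := by
      intro σ
      rw [norm_mul]
      have hsig : ‖((Equiv.Perm.sign σ : ℤ) : ℂ)‖ = 1 := by
        rcases Int.units_eq_one_or (Equiv.Perm.sign σ) with h | h <;> rw [h] <;> simp
      rw [hsig, one_mul, norm_prod]
      calc ∏ i, ‖(Matrix.of fun i l : Fin n => deriv^[(l:ℕ)] (F i) τ) (σ i) i‖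
          ≤ ∏ _i : Fin n, C0 := Finset.prod_le_prod (fun i _ => norm_nonneg _)
            (fun i _ => hentry (σ i) i)
        _ = C0^n := by rw [Finset.prod_const, Finset.card_univ, Fintype.card_fin]
    refine (norm_sum_le _ _).trans ((Finset.sum_le_sum (fun σ _ => hterm σ)).trans ?_)
    rw [Finset.sum_const, Finset.card_univ, nsmul_eq_mul]
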